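/- For any levels r and s: r ⊆ s if and only if s ∉ r. Moreover, for every level s, levof(s) = s. -/
import Mathlib


def pot (a : ZFSet) : ZFSet :=
  ZFSet.sep (fun x => ∃ c ∈ a, x ⊆ c) (ZFSet.powerset (ZFSet.sUnion a))

def Potent (a : ZFSet) : Prop := ∀ x, (∃ c, x ⊆ c ∧ c ∈ a) → x ∈ a

def IsHistory (h : ZFSet) : Prop := ∀ x ∈ h, x = pot (x ∩ h)

def IsLevel (s : ZFSet) : Prop := ∃ h, IsHistory h ∧ s = pot h

noncomputable def levof (a : ZFSet) : ZFSet :=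
  Classical.epsilon (fun s => IsLevel s ∧ a ⊆ s ∧ ∀ t, IsLevel t → a ⊆ t → t ∉ s)

lemma mem_pot {x a : ZFSet} : x ∈ pot a ↔ ∃ c ∈ a, x ⊆ c := by
  constructor
  · intro hx
    exact (ZFSet.mem_sep.mp hx).2
  · rintro ⟨c, hc, hxc⟩
    refine ZFSet.mem_sep.mpr ⟨?_, c, hc, hxc⟩
    rw [ZFSet.mem_powerset]
    intro y hy
    exact ZFSet.mem_sUnion.mpr ⟨c, hc, hxc hy⟩

/-- pot of anything is potent. -/
lemma pot_potent {x r a : ZFSet} (hxr : x ⊆ r) (hr : r ∈ pot a) : x ∈ pot a := by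
  obtain ⟨c, hc, hrc⟩ := mem_pot.mp hr
  exact mem_pot.mpr ⟨c, hc, hxr.trans hrc⟩

/-- pot of a history is transitive. -/
lemma pot_trans {h : ZFSet} (hh : IsHistory h) {a x : ZFSet}
    (ha : a ∈ pot h) (hx : x ∈ a) : x ∈ pot h := by
  obtain ⟨c, hc, hac⟩ := mem_pot.mp ha
  have hx' : x ∈ pot (c ∩ h) := by rw [← hh c hc]; exact hac hx
  obtain ⟨d, hd, hxd⟩ := mem_pot.mp hx'
  exact mem_pot.mpr ⟨d, (ZFSet.mem_inter.mp hd).2, hxd⟩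

/-- Key lemma (by ∈-induction): members of a history restrict to histories. -/
lemma inter_history : ∀ c : ZFSet, ∀ h : ZFSet, IsHistory h → c ∈ h →
    IsHistory (c ∩ h) := by
  intro c
  induction c using ZFSet.inductionOn with
  | _ c IH =>
    intro h hh hch
    intro x hx
    obtain ⟨hxc, hxh⟩ := ZFSet.mem_inter.mp hx
    have hx_eq : x = pot (x ∩ h) := hh x hxh
    -- suffices to show x ∩ h = x ∩ (c ∩ h), i.e. x ⊆ c
    have hxsub : x ⊆ c := by
      intro y hy
      -- x ∈ c = pot (c ∩ h)
      have hc_eq : c = pot (c ∩ h) := hh c hch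
      have hx' : x ∈ pot (c ∩ h) := by rw [← hc_eq]; exact hxc
      obtain ⟨d, hd, hxd⟩ := mem_pot.mp hx'
      obtain ⟨hdc, hdh⟩ := ZFSet.mem_inter.mp hd
      -- d is a level (its history is d ∩ h by IH), hence transitive
      have hdhist : IsHistory (d ∩ h) := IH d hdc h hh hdh
      have hd_eq : d = pot (d ∩ h) := hh d hdh
      have hyd : y ∈ d := hxd hy
      -- y ⊆ d by transitivity of pot (d ∩ h)
      have hysub : y ⊆ d := by
        intro z hz
        have : y ∈ pot (d ∩ h) := by rw [← hd_eq]; exact hyd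
        rw [hd_eq]
        exact pot_trans hdhist this hz
      rw [hc_eq]
      exact mem_pot.mpr ⟨d, hd, hysub⟩
    have hinter : x ∩ (c ∩ h) = x ∩ h := by
      apply ZFSet.ext
      intro z
      simp only [ZFSet.mem_inter]
      constructor
      · rintro ⟨hz1, _, hz3⟩; exact ⟨hz1, hz3⟩
      · rintro ⟨hz1, hz2⟩; exact ⟨hz1, hxsub hz1, hz2⟩
    rw [hinter]
    exact hx_eq

/-- members of histories are levels. -/
lemma mem_history_isLevel {h c : ZFSet} (hh : IsHistory h) (hc : c ∈ h) :
    IsLevel c := ⟨c ∩ h, inter_history c h hh hc, hh c hc⟩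

lemma level_trans {s : ZFSet} (hs : IsLevel s) {a x : ZFSet}
    (ha : a ∈ s) (hx : x ∈ a) : x ∈ s := by
  obtain ⟨h, hh, rfl⟩ := hs
  exact pot_trans hh ha hx

lemma level_potent {s : ZFSet} (hs : IsLevel s) {x r : ZFSet}
    (hxr : x ⊆ r) (hr : r ∈ s) : x ∈ s := by
  obtain ⟨h, hh, rfl⟩ := hs
  exact pot_potent hxr hr

noncomputable def hset (s : ZFSet) : ZFSet := ZFSet.sep IsLevel s

lemma mem_hset {x s : ZFSet} : x ∈ hset s ↔ x ∈ s ∧ IsLevel x := ZFSet.mem_sep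

/-- Every level is the pot of the set of levels in it. -/
lemma level_eq_pot_hset {s : ZFSet} (hs : IsLevel s) : s = pot (hset s) := by
  obtain ⟨h, hh, rfl⟩ := hs
  apply ZFSet.ext
  intro x
  constructor
  · intro hx
    obtain ⟨c, hc, hxc⟩ := mem_pot.mp hx
    have hcs : c ∈ pot h := mem_pot.mpr ⟨c, hc, fun _ hz => hz⟩
    exact mem_pot.mpr ⟨c, mem_hset.mpr ⟨hcs, mem_history_isLevel hh hc⟩, hxc⟩
  · intro hx
    obtain ⟨c, hc, hxc⟩ := mem_pot.mp hx
    exact pot_potent hxc (mem_hset.mp hc).1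

/-- The set of levels in a level is a history. -/
lemma hset_history {s : ZFSet} (hs : IsLevel s) : IsHistory (hset s) := by
  intro r hr
  obtain ⟨hrs, hrlev⟩ := mem_hset.mp hr
  have h1 : r = pot (hset r) := level_eq_pot_hset hrlev
  have h2 : r ∩ hset s = hset r := by
    apply ZFSet.ext
    intro t
    simp only [ZFSet.mem_inter, mem_hset]
    constructor
    · rintro ⟨ht1, _, ht3⟩; exact ⟨ht1, ht3⟩
    · rintro ⟨ht1, ht2⟩; exact ⟨ht1, level_trans hs hrs ht1, ht2⟩
  rw [h2]; exact h1

/-- Trichotomy for levels. -/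
lemma level_trichotomy : ∀ r : ZFSet, IsLevel r → ∀ s : ZFSet, IsLevel s →
    r ∈ s ∨ r = s ∨ s ∈ r := by
  intro r
  induction r using ZFSet.inductionOn with
  | _ r IH1 =>
    intro hr s
    induction s using ZFSet.inductionOn with
    | _ s IH2 =>
      intro hs
      by_cases hrs : r ∈ s
      · exact Or.inl hrs
      by_cases hsr : s ∈ r
      · exact Or.inr (Or.inr hsr)
      refine Or.inr (Or.inl (ZFSet.ext fun x => ⟨?_, ?_⟩))
      · intro hx
        have hx' : x ∈ pot (hset r) := by rw [← level_eq_pot_hset hr]; exact hx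
        obtain ⟨r', hr', hxr'⟩ := mem_pot.mp hx'
        obtain ⟨hr'r, hr'lev⟩ := mem_hset.mp hr'
        rcases IH1 r' hr'r hr'lev s hs with h | h | h
        · exact level_potent hs hxr' h
        · exact absurd (h ▸ hr'r) hsr
        · exact absurd (level_trans hr hr'r h) hsr
      · intro hx
        have hx' : x ∈ pot (hset s) := by rw [← level_eq_pot_hset hs]; exact hx
        obtain ⟨s', hs', hxs'⟩ := mem_pot.mp hx'
        obtain ⟨hs's, hs'lev⟩ := mem_hset.mp hs'
        rcases IH2 s' hs's hs'lev with h | h | h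
        · exact absurd (level_trans hs hs's h) hrs
        · exact absurd (h ▸ hs's) hrs
        · exact level_potent hr hxs' h

lemma level_subset_iff : ∀ r s : ZFSet, IsLevel r → IsLevel s → (r ⊆ s ↔ s ∉ r) := by
    intro r s hr hs
    constructor
    · intro hsub hsr
      exact ZFSet.mem_irrefl s (hsub hsr)
    · intro hsr
      rcases level_trichotomy r hr s hs with h | h | h
      · intro x hx; exact level_trans hs h hx
      · exact h ▸ fun _ hx => hx
      · exact absurd h hsr

theorem stmt10 :
    (∀ r s : ZFSet, IsLevel r → IsLevel s → (r ⊆ s ↔ s ∉ r)) ∧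
    (∀ s : ZFSet, IsLevel s → levof s = s) := by
  refine ⟨level_subset_iff, ?_⟩
  intro s hs
  set P := fun t => IsLevel t ∧ s ⊆ t ∧ ∀ u, IsLevel u → s ⊆ u → u ∉ t with hP
  have hPs : P s := by
    refine ⟨hs, fun _ hx => hx, ?_⟩
    intro u _ hsu hus
    exact ZFSet.mem_irrefl u (hsu hus)
  have hspec : P (Classical.epsilon P) := Classical.epsilon_spec ⟨s, hPs⟩
  obtain ⟨hlev, hsub, hmin⟩ := hspec
  have hns : s ∉ Classical.epsilon P := hmin s hs (fun _ hx => hx)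
  have h1 : Classical.epsilon P ⊆ s := (level_subset_iff _ s hlev hs).mpr hns
  apply ZFSet.ext
  intro x
  exact ⟨fun hx => h1 hx, fun hx => hsub hx⟩
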